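/- Let G be a finite simple graph with m edges, let p : S → C be a partial coloring of G, let T = C(m,2) + 1, and let H be the T-copy split gadget of G with the partial coloring q that precolors every copy (u,i) with p(u) for each u ∈ S and i ∈ {1,…,T} (and precolors no edge-vertex). Then for every nonnegative integer k, there exists a total coloring of G extending p with at least k happy edges if and only if there exists a total coloring of H extending q with at least T·(m + k) happy edges. -/

import Mathlib

/-- The number of happy edges (edges whose endpoints share a color) w.r.t. a total coloring. -/
noncomputable def happyEdgeCount {V Col : Type*} (G : SimpleGraph V) (c : V → Col) : ℕ :=
  {e ∈ G.edgeSet | (Sym2.map c e).IsDiag}.ncard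

/-- The `T`-copy split gadget of a graph: `T` copies of each vertex of `G`, each adjacent to
the edge-vertices of its incident edges, and the edge-vertices form a clique. -/
def SplitGadget {V : Type*} (G : SimpleGraph V) (T : ℕ) :
    SimpleGraph ((V × Fin T) ⊕ G.edgeSet) where
  Adj x y :=
    match x, y with
    | Sum.inl a, Sum.inr e => a.1 ∈ (e : Sym2 V)
    | Sum.inr e, Sum.inl a => a.1 ∈ (e : Sym2 V)
    | Sum.inr e, Sum.inr f => e ≠ f
    | _, _ => False
  symm := by
    constructor
    rintro (a | e) (b | f) h <;> simp_all
    exact fun h' => h h'.symm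
  loopless := by
    constructor
    rintro (a | e) h <;> simp_all

namespace SGaux

variable {V Col : Type*}

noncomputable def u1 (e : Sym2 V) : V := e.out.1
noncomputable def u2 (e : Sym2 V) : V := e.out.2

lemma mk_out (e : Sym2 V) : s(u1 e, u2 e) = e := Quot.out_eq e

lemma mem_iff' (e : Sym2 V) (v : V) : v ∈ e ↔ v = u1 e ∨ v = u2 e := by
  conv_lhs => rw [← mk_out e]
  exact Sym2.mem_iff

lemma u1_mem (e : Sym2 V) : u1 e ∈ e := (mem_iff' e _).mpr (Or.inl rfl)
lemma u2_mem (e : Sym2 V) : u2 e ∈ e := (mem_iff' e _).mpr (Or.inr rfl)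

lemma isDiag_map_iff (f : V → Col) (e : Sym2 V) :
    (Sym2.map f e).IsDiag ↔ f (u1 e) = f (u2 e) := by
  conv_lhs => rw [← mk_out e]
  rw [Sym2.map_pair_eq, Sym2.mk_isDiag_iff]

lemma u1_ne_u2 {G : SimpleGraph V} {e : Sym2 V} (he : e ∈ G.edgeSet) : u1 e ≠ u2 e := by
  intro h
  exact G.not_isDiag_of_mem_edgeSet he (by rw [← mk_out e, Sym2.mk_isDiag_iff]; exact h)

section gadget

variable {G : SimpleGraph V} {T : ℕ}

lemma adj_inl_inr {a : V × Fin T} {e : G.edgeSet} :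
    (SplitGadget G T).Adj (Sum.inl a) (Sum.inr e) ↔ a.1 ∈ (e : Sym2 V) := Iff.rfl

lemma adj_inr_inl {a : V × Fin T} {e : G.edgeSet} :
    (SplitGadget G T).Adj (Sum.inr e) (Sum.inl a) ↔ a.1 ∈ (e : Sym2 V) := Iff.rfl

lemma adj_inr_inr {e f : G.edgeSet} :
    (SplitGadget G T).Adj (Sum.inr e) (Sum.inr f) ↔ e ≠ f := Iff.rfl

lemma adj_inl_inl {a b : V × Fin T} :
    ¬ (SplitGadget G T).Adj (Sum.inl a) (Sum.inl b) := fun h => h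

end gadget

/-- The lower-bound (forward) direction: extending `c` to the gadget canonically. -/
lemma lower_bound [Fintype V] [DecidableEq V] (G : SimpleGraph V) [DecidableRel G.Adj]
    (T : ℕ) (c : V → Col) :
    T * (G.edgeSet.ncard + happyEdgeCount G c) ≤
      happyEdgeCount (SplitGadget G T)
        (fun x => match x with
          | Sum.inl a => c a.1
          | Sum.inr e => c (u1 (e : Sym2 V))) := by
  classical
  set c' : (V × Fin T) ⊕ G.edgeSet → Col :=
    (fun x => match x with
      | Sum.inl a => c a.1
      | Sum.inr e => c (u1 (e : Sym2 V))) with hc'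
  set HG : Set (Sym2 V) := {e ∈ G.edgeSet | (Sym2.map c e).IsDiag} with hHG
  set ι : Fin T × (G.edgeSet ⊕ HG) → Sym2 ((V × Fin T) ⊕ G.edgeSet) :=
    fun x => match x with
    | (i, Sum.inl e) => s(Sum.inl (u1 (e : Sym2 V), i), Sum.inr e)
    | (i, Sum.inr h) => s(Sum.inl (u2 (h : Sym2 V), i), Sum.inr ⟨(h : Sym2 V), h.2.1⟩)
    with hι
  have hinj : Function.Injective ι := by
    rintro ⟨i, e | h⟩ ⟨j, f | g⟩ heq <;>
      simp only [hι, Sym2.eq_iff, Prod.mk.injEq, Sum.inl.injEq, Sum.inr.injEq,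
        reduceCtorEq, and_false, false_and, or_false, false_or, Subtype.mk.injEq] at heq
    · obtain ⟨⟨-, rfl⟩, rfl⟩ := heq; rfl
    · obtain ⟨⟨h1, rfl⟩, h2⟩ := heq
      rw [h2] at h1
      exact absurd h1 (u1_ne_u2 g.2.1)
    · obtain ⟨⟨h1, rfl⟩, h2⟩ := heq
      rw [← h2] at h1
      exact absurd h1.symm (u1_ne_u2 h.2.1)
    · obtain ⟨⟨-, rfl⟩, h2⟩ := heq
      rw [Subtype.ext h2]
  have hsub : Set.range ι ⊆
      {x ∈ (SplitGadget G T).edgeSet | (Sym2.map c' x).IsDiag} := by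
    rintro x ⟨⟨i, e | h⟩, rfl⟩
    · refine ⟨?_, ?_⟩
      · rw [SimpleGraph.mem_edgeSet]
        exact adj_inl_inr.mpr (u1_mem _)
      · rw [Sym2.map_pair_eq, Sym2.mk_isDiag_iff]
    · refine ⟨?_, ?_⟩
      · rw [SimpleGraph.mem_edgeSet]
        exact adj_inl_inr.mpr (u2_mem _)
      · rw [Sym2.map_pair_eq, Sym2.mk_isDiag_iff]
        have := h.2.2
        exact ((isDiag_map_iff c _).mp this).symm
  have h1 : Nat.card (Fin T × (↥G.edgeSet ⊕ ↥HG)) = T * (G.edgeSet.ncard + HG.ncard) := by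
    rw [Nat.card_prod, Nat.card_sum, Nat.card_coe_set_eq, Nat.card_coe_set_eq,
      show Nat.card (Fin T) = T by simp]
  have h2 : (Set.range ι).ncard = T * (G.edgeSet.ncard + HG.ncard) := by
    rw [← Nat.card_coe_set_eq, Nat.card_range_of_injective hinj, h1]
  have hHGc : happyEdgeCount G c = HG.ncard := rfl
  calc T * (G.edgeSet.ncard + happyEdgeCount G c)
      = (Set.range ι).ncard := by rw [h2, hHGc]
    _ ≤ happyEdgeCount (SplitGadget G T) c' := by
        unfold happyEdgeCount
        exact Set.ncard_le_ncard hsub (Set.toFinite _)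

variable [DecidableEq V] [DecidableEq Col]

noncomputable def Bb {G : SimpleGraph V} {T : ℕ}
    (c' : (V × Fin T) ⊕ G.edgeSet → Col) (u : V) (i : Fin T) (e : G.edgeSet) : Bool :=
  if c' (Sum.inl (u1 (e : Sym2 V), i)) = c' (Sum.inl (u2 (e : Sym2 V), i)) then
    decide (u = u1 (e : Sym2 V))
  else true

noncomputable def gfun {G : SimpleGraph V} {T : ℕ}
    (c' : (V × Fin T) ⊕ G.edgeSet → Col) :
    ((V × Fin T) ⊕ G.edgeSet) → ((V × Fin T) ⊕ G.edgeSet) →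
      (Sym2 G.edgeSet ⊕ ((G.edgeSet × Fin T × Bool) ⊕ Unit))
  | Sum.inr e, Sum.inr f => Sum.inl s(e, f)
  | Sum.inl a, Sum.inr e => Sum.inr (Sum.inl (e, a.2, Bb c' a.1 a.2 e))
  | Sum.inr e, Sum.inl a => Sum.inr (Sum.inl (e, a.2, Bb c' a.1 a.2 e))
  | Sum.inl _, Sum.inl _ => Sum.inr (Sum.inr ())

noncomputable def Ff {G : SimpleGraph V} {T : ℕ}
    (c' : (V × Fin T) ⊕ G.edgeSet → Col) (x : Sym2 ((V × Fin T) ⊕ G.edgeSet)) :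
    Sym2 G.edgeSet ⊕ ((G.edgeSet × Fin T × Bool) ⊕ Unit) :=
  gfun c' (u1 x) (u2 x)

/-- The upper-bound (backward) direction. -/
lemma upper_bound [Fintype V] (G : SimpleGraph V) [DecidableRel G.Adj]
    (T : ℕ) (c' : (V × Fin T) ⊕ G.edgeSet → Col) :
    happyEdgeCount (SplitGadget G T) c' ≤
      (G.edgeSet.ncard).choose 2 + T * G.edgeSet.ncard
        + ∑ i : Fin T, happyEdgeCount G (fun v => c' (Sum.inl (v, i))) := by
  classical
  set HS := {x ∈ (SplitGadget G T).edgeSet | (Sym2.map c' x).IsDiag} with hHS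
  have shape : ∀ x ∈ HS,
      (∃ (u : V) (i : Fin T) (e : G.edgeSet), x = s(Sum.inl (u, i), Sum.inr e)
          ∧ u ∈ (e : Sym2 V)
          ∧ c' (Sum.inl (u, i)) = c' (Sum.inr e)
          ∧ Ff c' x = Sum.inr (Sum.inl (e, i, Bb c' u i e)))
      ∨ (∃ e f : G.edgeSet, x = s(Sum.inr e, Sum.inr f) ∧ e ≠ f
          ∧ Ff c' x = Sum.inl s(e, f)) := by
    intro x hx
    obtain ⟨hx1, hx2⟩ := hx
    have hadj : (SplitGadget G T).Adj (u1 x) (u2 x) := by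
      rw [← SimpleGraph.mem_edgeSet, mk_out]; exact hx1
    have hhap : c' (u1 x) = c' (u2 x) := (isDiag_map_iff c' x).mp hx2
    have ex : x = s(u1 x, u2 x) := (mk_out x).symm
    have hFf : Ff c' x = gfun c' (u1 x) (u2 x) := rfl
    rcases h1 : u1 x with a | e <;> rcases h2 : u2 x with b | f <;>
      rw [h1, h2] at hadj ex hhap hFf
    · exact absurd hadj adj_inl_inl
    · exact Or.inl ⟨a.1, a.2, f, ex, hadj, hhap, hFf⟩
    · refine Or.inl ⟨b.1, b.2, e, ?_, hadj, hhap.symm, hFf⟩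
      rw [ex, Sym2.eq_swap]
    · exact Or.inr ⟨e, f, ex, hadj, hFf⟩
  have hinj : Set.InjOn (Ff c') HS := by
    intro x hx y hy hFxy
    rcases shape x hx with ⟨u, i, e, hxe, hue, hxc, hxF⟩ | ⟨e, f, hxe, hef, hxF⟩ <;>
      rcases shape y hy with ⟨u', i', e', hye, hue', hyc, hyF⟩ | ⟨e', f', hye, hef', hyF⟩
    · rw [hxF, hyF] at hFxy
      simp only [Sum.inr.injEq, Sum.inl.injEq, Prod.mk.injEq] at hFxy
      obtain ⟨rfl, rfl, hB⟩ := hFxy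
      have hne : u1 (e : Sym2 V) ≠ u2 (e : Sym2 V) := u1_ne_u2 e.2
      have hmem := (mem_iff' (e : Sym2 V) u).mp hue
      have hmem' := (mem_iff' (e : Sym2 V) u').mp hue'
      have huu : u = u' := by
        by_cases hp : c' (Sum.inl (u1 (e : Sym2 V), i)) = c' (Sum.inl (u2 (e : Sym2 V), i))
        · rw [Bb, if_pos hp, Bb, if_pos hp, decide_eq_decide] at hB
          rcases hmem with rfl | rfl <;> rcases hmem' with rfl | rfl <;> simp_all
        · by_contra hne'
          refine hp ?_
          rcases hmem with rfl | rfl <;> rcases hmem' with rfl | rfl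
          · exact absurd rfl hne'
          · rw [hxc, hyc]
          · rw [hyc, hxc]
          · exact absurd rfl hne'
      rw [hxe, hye, huu]
    · rw [hxF, hyF] at hFxy; exact absurd hFxy (by simp)
    · rw [hxF, hyF] at hFxy; exact absurd hFxy (by simp)
    · rw [hxF, hyF] at hFxy
      simp only [Sum.inl.injEq, Sym2.eq_iff] at hFxy
      rw [hxe, hye]
      rcases hFxy with ⟨rfl, rfl⟩ | ⟨rfl, rfl⟩
      · rfl
      · exact Sym2.eq_swap
  set D1 : Set (Sym2 G.edgeSet ⊕ ((G.edgeSet × Fin T × Bool) ⊕ Unit)) :=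
    Sum.inl '' {z : Sym2 G.edgeSet | ¬ z.IsDiag} with hD1def
  set W : Set (G.edgeSet × Fin T × Bool) :=
    {x | x.2.2 = true ∨
      c' (Sum.inl (u1 (x.1 : Sym2 V), x.2.1)) = c' (Sum.inl (u2 (x.1 : Sym2 V), x.2.1))}
    with hWdef
  set D2 : Set (Sym2 G.edgeSet ⊕ ((G.edgeSet × Fin T × Bool) ⊕ Unit)) :=
    (fun y => Sum.inr (Sum.inl y)) '' W with hD2def
  have himg : Ff c' '' HS ⊆ D1 ∪ D2 := by
    rintro _ ⟨x, hx, rfl⟩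
    rcases shape x hx with ⟨u, i, e, hxe, hue, hxc, hxF⟩ | ⟨e, f, hxe, hef, hxF⟩
    · right
      rw [hxF]
      refine ⟨(e, i, Bb c' u i e), ?_, rfl⟩
      by_cases hp : c' (Sum.inl (u1 (e : Sym2 V), i)) = c' (Sum.inl (u2 (e : Sym2 V), i))
      · exact Or.inr hp
      · left
        simp [Bb, if_neg hp]
    · left
      rw [hxF]
      exact ⟨s(e, f), by simpa [Sym2.mk_isDiag_iff] using hef, rfl⟩
  have hcard : happyEdgeCount (SplitGadget G T) c' = (Ff c' '' HS).ncard := by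
    unfold happyEdgeCount
    rw [Set.ncard_image_of_injOn hinj]
  have hD1 : D1.ncard = (G.edgeSet.ncard).choose 2 := by
    rw [hD1def, Set.ncard_image_of_injective _ Sum.inl_injective, ← Nat.card_coe_set_eq]
    have e1 : Nat.card ↥{z : Sym2 (↥G.edgeSet) | ¬ z.IsDiag}
        = Nat.card {z : Sym2 (↥G.edgeSet) // ¬ z.IsDiag} := rfl
    rw [e1, Nat.card_eq_fintype_card, Sym2.card_subtype_not_diag,
      ← Nat.card_eq_fintype_card, Nat.card_coe_set_eq]
  set HP : Set (G.edgeSet × Fin T) :=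
    {y | c' (Sum.inl (u1 (y.1 : Sym2 V), y.2)) = c' (Sum.inl (u2 (y.1 : Sym2 V), y.2))}
    with hHPdef
  have hWsub : W ⊆ {x : G.edgeSet × Fin T × Bool | x.2.2 = true}
      ∪ (fun y : G.edgeSet × Fin T => (y.1, y.2, false)) '' HP := by
    rintro ⟨e, i, b⟩ hx
    rcases b with _ | _
    · rcases hx with hx | hx
      · exact absurd hx (by simp)
      · exact Or.inr ⟨(e, i), hx, rfl⟩
    · exact Or.inl rfl
  have hA : {x : G.edgeSet × Fin T × Bool | x.2.2 = true}
      = Set.range (fun y : G.edgeSet × Fin T => (y.1, y.2, true)) := by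
    ext ⟨e, i, b⟩
    constructor
    · intro hb
      exact ⟨(e, i), by simp_all⟩
    · rintro ⟨⟨f, j⟩, hy⟩
      simp only [Prod.mk.injEq] at hy
      simp [← hy.2.2]
  have hAcard : {x : G.edgeSet × Fin T × Bool | x.2.2 = true}.ncard = T * G.edgeSet.ncard := by
    rw [hA, ← Nat.card_coe_set_eq, Nat.card_range_of_injective, Nat.card_prod,
      Nat.card_coe_set_eq]
    · simp [mul_comm]
    · rintro ⟨e, i⟩ ⟨f, j⟩ h
      simpa [Prod.ext_iff] using h
  have hHPsum : HP.ncard ≤ ∑ i : Fin T, happyEdgeCount G (fun v => c' (Sum.inl (v, i))) := by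
    have hkey : ∀ i : Fin T,
        happyEdgeCount G (fun v => c' (Sum.inl (v, i)))
          = Nat.card ↥{e ∈ G.edgeSet | (Sym2.map (fun v => c' (Sum.inl (v, i))) e).IsDiag} := by
      intro i
      rw [happyEdgeCount, Nat.card_coe_set_eq]
    set HGi : Fin T → Set (Sym2 V) :=
      fun i => {e ∈ G.edgeSet | (Sym2.map (fun v => c' (Sum.inl (v, i))) e).IsDiag} with hHGidef
    have hle : Nat.card ↥HP ≤ Nat.card (Σ i : Fin T, ↥(HGi i)) := by
      apply Nat.card_le_card_of_injective
        (fun z : ↥HP =>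
          (⟨z.1.2, ⟨(z.1.1 : Sym2 V), ⟨z.1.1.2, (isDiag_map_iff _ _).mpr z.2⟩⟩⟩ :
            Σ i : Fin T, ↥(HGi i)))
      rintro ⟨⟨e, i⟩, hz⟩ ⟨⟨f, j⟩, hw⟩ h
      dsimp only at h
      have h1 : i = j := congrArg Sigma.fst h
      subst h1
      have h2 := sigma_mk_injective h
      have h3 : (e : Sym2 V) = (f : Sym2 V) := congrArg (Subtype.val : ↥(HGi i) → Sym2 V) h2
      exact Subtype.ext (Prod.ext (Subtype.ext h3) rfl)
    have hsig : Nat.card (Σ i : Fin T, ↥(HGi i)) = ∑ i : Fin T, Nat.card ↥(HGi i) := by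
      letI : ∀ i, Fintype ↥(HGi i) := fun i => Fintype.ofFinite _
      simp [Nat.card_eq_fintype_card]
    rw [← Nat.card_coe_set_eq]
    calc Nat.card ↥HP ≤ _ := hle
      _ = ∑ i : Fin T, Nat.card ↥(HGi i) := hsig
      _ = ∑ i : Fin T, happyEdgeCount G (fun v => c' (Sum.inl (v, i))) := by
          refine Finset.sum_congr rfl fun i _ => ?_
          rw [hkey i]
  have hWcard : W.ncard ≤ T * G.edgeSet.ncard
      + ∑ i : Fin T, happyEdgeCount G (fun v => c' (Sum.inl (v, i))) := by
    calc W.ncard ≤ ({x : G.edgeSet × Fin T × Bool | x.2.2 = true}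
          ∪ (fun y : G.edgeSet × Fin T => (y.1, y.2, false)) '' HP).ncard :=
        Set.ncard_le_ncard hWsub (Set.toFinite _)
      _ ≤ {x : G.edgeSet × Fin T × Bool | x.2.2 = true}.ncard
          + ((fun y : G.edgeSet × Fin T => (y.1, y.2, false)) '' HP).ncard :=
        Set.ncard_union_le _ _
      _ ≤ T * G.edgeSet.ncard
          + ∑ i : Fin T, happyEdgeCount G (fun v => c' (Sum.inl (v, i))) := by
        rw [hAcard, Set.ncard_image_of_injective _ (by
          rintro ⟨e, i⟩ ⟨f, j⟩ h
          simpa [Prod.ext_iff] using h)]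
        exact Nat.add_le_add_left hHPsum _
  have hD2card : D2.ncard ≤ T * G.edgeSet.ncard
      + ∑ i : Fin T, happyEdgeCount G (fun v => c' (Sum.inl (v, i))) := by
    rw [hD2def, Set.ncard_image_of_injective _ (by
      intro a b h
      simpa using h)]
    exact hWcard
  calc happyEdgeCount (SplitGadget G T) c' = (Ff c' '' HS).ncard := hcard
    _ ≤ (D1 ∪ D2).ncard := Set.ncard_le_ncard himg (Set.toFinite _)
    _ ≤ D1.ncard + D2.ncard := Set.ncard_union_le _ _
    _ ≤ (G.edgeSet.ncard).choose 2 + (T * G.edgeSet.ncard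
          + ∑ i : Fin T, happyEdgeCount G (fun v => c' (Sum.inl (v, i)))) := by
        rw [hD1]
        exact Nat.add_le_add_left hD2card _
    _ = _ := by ring

end SGaux

/-- With `T = C(m,2) + 1`: `G` with partial coloring `p` admits an extension with at least `k`
happy edges iff the `T`-copy split gadget of `G`, precolored by `p` on every copy of every
precolored vertex, admits an extension with at least `T * (m + k)` happy edges. -/
theorem splitGadget_happyEdges_iff
    {V Col : Type*} [Fintype V] [DecidableEq V] (G : SimpleGraph V) [DecidableRel G.Adj]
    (S : Set V) (p : S → Col) (T : ℕ) (hT : T = Nat.choose G.edgeSet.ncard 2 + 1) (k : ℕ) :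
    (∃ c : V → Col, (∀ v (hv : v ∈ S), c v = p ⟨v, hv⟩) ∧ k ≤ happyEdgeCount G c) ↔
    (∃ c' : ((V × Fin T) ⊕ G.edgeSet) → Col,
      (∀ (v : V) (hv : v ∈ S) (i : Fin T), c' (Sum.inl (v, i)) = p ⟨v, hv⟩) ∧
      T * (G.edgeSet.ncard + k) ≤ happyEdgeCount (SplitGadget G T) c') := by
  classical
  constructor
  · rintro ⟨c, hc, hk⟩
    refine ⟨fun x => match x with
      | Sum.inl a => c a.1
      | Sum.inr e => c (SGaux.u1 (e : Sym2 V)), fun v hv i => hc v hv, ?_⟩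
    calc T * (G.edgeSet.ncard + k)
        ≤ T * (G.edgeSet.ncard + happyEdgeCount G c) := Nat.mul_le_mul_left _ (by omega)
      _ ≤ _ := SGaux.lower_bound G T c
  · rintro ⟨c', hc', hcount⟩
    have hub := SGaux.upper_bound G T c'
    by_contra hno
    push_neg at hno
    have hlt : ∀ i : Fin T, happyEdgeCount G (fun v => c' (Sum.inl (v, i))) < k :=
      fun i => hno (fun v => c' (Sum.inl (v, i))) (fun v hv => hc' v hv i)
    have hT0 : 0 < T := by omega
    obtain ⟨k', rfl⟩ : ∃ k', k = k' + 1 := ⟨k - 1, by have := hlt ⟨0, hT0⟩; omega⟩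
    have hsum : ∑ i : Fin T, happyEdgeCount G (fun v => c' (Sum.inl (v, i))) ≤ T * k' := by
      calc ∑ i : Fin T, happyEdgeCount G (fun v => c' (Sum.inl (v, i)))
          ≤ ∑ _i : Fin T, k' := Finset.sum_le_sum (fun i _ => by have := hlt i; omega)
        _ = T * k' := by simp [mul_comm]
    have key : T * (G.edgeSet.ncard + (k' + 1))
        ≤ (G.edgeSet.ncard).choose 2 + T * G.edgeSet.ncard + T * k' :=
      le_trans hcount (le_trans hub (by omega))
    have expand : T * (G.edgeSet.ncard + (k' + 1))
        = T * G.edgeSet.ncard + T * k' + T := by ring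
    rw [expand] at key
    set A := T * G.edgeSet.ncard with hAdef
    set B := T * k' with hBdef
    set Cc := (G.edgeSet.ncard).choose 2 with hCcdef
    omega
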